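/- The RBF (squared exponential) kernel k(s,t) = exp(−(s−t)²/(2l²)) with l > 0 is a positive semidefinite kernel on ℝ: every Gram matrix formed from finitely many points is positive semidefinite. -/
import Mathlib

theorem rbf_kernel_posSemidef (l : ℝ) (hl : 0 < l)
    (n : ℕ) (t : Fin n → ℝ) (x : Fin n → ℝ) :
    0 ≤ ∑ i, ∑ j, x i * Real.exp (-(t i - t j) ^ 2 / (2 * l ^ 2)) * x j := by
  have hl' : l ≠ 0 := ne_of_gt hl
  set c : Fin n → ℝ := fun i => x i * Real.exp (-(t i)^2 / (2*l^2)) with hc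
  set u : Fin n → ℝ := fun i => t i / l with hu
  have hexp : ∀ a : ℝ, Real.exp a = ∑' m : ℕ, a ^ m / m.factorial := by
    intro a
    rw [Real.exp_eq_exp_ℝ, NormedSpace.exp_eq_tsum_div]
  have key : ∀ i j, x i * Real.exp (-(t i - t j) ^ 2 / (2 * l ^ 2)) * x j
      = ∑' m : ℕ, c i * c j * ((u i * u j) ^ m / m.factorial) := by
    intro i j
    conv_rhs => rw [tsum_mul_left, ← hexp]
    simp only [hc, hu]
    rw [show -(t i - t j)^2/(2*l^2) = -(t i)^2/(2*l^2) + (-(t j)^2/(2*l^2) + (t i / l) * (t j / l)) from by field_simp; ring,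
      Real.exp_add, Real.exp_add]
    ring
  have hsummable : ∀ i j : Fin n, Summable (fun m : ℕ => c i * c j * ((u i * u j) ^ m / m.factorial)) :=
    fun i j => (Real.summable_pow_div_factorial (u i * u j)).mul_left _
  calc (0:ℝ) ≤ ∑' m : ℕ, (∑ i, c i * u i ^ m)^2 / m.factorial := by
        apply tsum_nonneg
        intro m
        positivity
    _ = ∑' m : ℕ, ∑ i, ∑ j, c i * c j * ((u i * u j) ^ m / m.factorial) := by
        congr 1
        ext m
        rw [pow_two, Finset.sum_mul_sum, Finset.sum_div]
        congr 1; ext i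
        rw [Finset.sum_div]
        congr 1; ext j
        rw [mul_pow]
        ring
    _ = ∑ i, ∑ j, ∑' m : ℕ, c i * c j * ((u i * u j) ^ m / m.factorial) := by
        rw [Summable.tsum_finsetSum (fun i _ => summable_sum (fun j _ => hsummable i j))]
        congr 1; ext i
        rw [Summable.tsum_finsetSum (fun j _ => hsummable i j)]
    _ = ∑ i, ∑ j, x i * Real.exp (-(t i - t j) ^ 2 / (2 * l ^ 2)) * x j := by
        simp only [key]
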